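/- For every l ∈ L one has z(l) = Σ_{J ⊂ V} (−1)^{|J|+1} w(l,J), where the sum is over all subsets J of V (including the empty set). -/

import Mathlib

open Matrix

open scoped Classical

noncomputable section

namespace Plumbing

variable {V : Type*} [Fintype V] [DecidableEq V]

/-- The rational matrix associated with the integral intersection matrix. -/
def Aq (A : Matrix V V ℤ) : Matrix V V ℚ := A.map fun n => (n : ℚ)

/-- Negative definiteness of the intersection form. -/
def NegDef (A : Matrix V V ℤ) : Prop :=
  ∀ x : V → ℚ, x ≠ 0 → x ⬝ᵥ (Aq A).mulVec x < 0

/-- The dual base element `E*_v`, the `v`-th column of `−A⁻¹`. -/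
def Estar (A : Matrix V V ℤ) (v : V) : V → ℚ := fun w => (-(Aq A)⁻¹) w v

/-- Membership in the dual lattice `L' = {x ∈ ℚ^V : Ax ∈ ℤ^V}`. -/
def memLp (A : Matrix V V ℤ) (x : V → ℚ) : Prop :=
  ∀ v, ∃ n : ℤ, (Aq A).mulVec x v = (n : ℚ)

/-- `x` and `y` are in the same class of `H = L'/L`, i.e. `x - y ∈ L`. -/
def sameClass {W : Type*} (x y : W → ℚ) : Prop := ∀ w, ∃ n : ℤ, x w - y w = (n : ℚ)

/-- The valency of a vertex. -/
def deg {W : Type*} (G : SimpleGraph W) (w : W) : ℕ := (G.neighborSet w).ncard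

/-- The coefficients `c_v(k)`. -/
def ccoef (d k : ℕ) : ℤ :=
  if 2 ≤ d then (-1 : ℤ) ^ k * (Nat.choose (d - 2) k) else (Nat.choose (k + 1 - d) k)

/-- The coefficient `z(l')` of the multivariable series `Z(t)`. -/
def zcoef (A : Matrix V V ℤ) (δ : V → ℕ) (l' : V → ℚ) : ℤ :=
  ∑ᶠ k : V → ℕ,
    if (∑ v, (k v : ℚ) • Estar A v) = l' then ∏ v, ccoef (δ v) (k v) else 0

/-- The counting function `Q_{[x]}(x)`. -/
def Qcount (A : Matrix V V ℤ) (δ : V → ℕ) (x : V → ℚ) : ℤ :=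
  ∑ᶠ l' : V → ℚ,
    if memLp A l' ∧ sameClass l' x ∧ ¬ x ≤ l' then zcoef A δ l' else 0

/-- The counting function `Q_{[x],I}(x)` of the reduced series. -/
def QcountI (A : Matrix V V ℤ) (δ : V → ℕ) (I : Set V) (x : V → ℚ) : ℤ :=
  ∑ᶠ l' : V → ℚ,
    if memLp A l' ∧ sameClass l' x ∧ ¬ (∀ v ∈ I, x v ≤ l' v) then zcoef A δ l' else 0

/-- The counting function `Q_{0,I}(x)` on the integral lattice. -/
def QcountI0 (A : Matrix V V ℤ) (δ : V → ℕ) (I : Set V) (x : V → ℤ) : ℤ :=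
  ∑ᶠ l : V → ℤ,
    if ¬ (∀ v ∈ I, x v ≤ l v) then zcoef A δ (fun v => (l v : ℚ)) else 0

/-- The modified counting function `q_{[x],J}(x)`. -/
def qmod (A : Matrix V V ℤ) (δ : V → ℕ) (J : Set V) (x : V → ℚ) : ℤ :=
  ∑ᶠ l' : V → ℚ,
    if memLp A l' ∧ sameClass l' x ∧ (∀ v ∈ J, l' v < x v) then zcoef A δ l' else 0

/-- The coefficient function of the reduced series `Z(t_W)`. -/
def zred (A : Matrix V V ℤ) (δ : V → ℕ) (W : Set V) (y : W → ℚ) : ℤ :=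
  ∑ᶠ l' : V → ℚ, if (fun w : W => l' w.1) = y then zcoef A δ l' else 0

/-- The intersection matrix of a full subgraph. -/
def subM (A : Matrix V V ℤ) (W : Set V) : Matrix W W ℤ :=
  A.submatrix Subtype.val Subtype.val

/-- The restriction operator `j*_W : L'(T) → L'(T(W))`. -/
def jstar (A : Matrix V V ℤ) (W : Set V) (l' : V → ℚ) : W → ℚ :=
  (Aq (subM A W))⁻¹.mulVec fun w => (Aq A).mulVec l' w.1

/-- The canonical cycle `K`, the unique solution of `(K + E_v, E_v) = -2`. -/
def Kcan (A : Matrix V V ℤ) : V → ℚ :=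
  (Aq A)⁻¹.mulVec fun v => (-2 : ℚ) - (A v v : ℚ)

/-- The Riemann–Roch expression `χ(x) = -(x, x + K)/2`. -/
def chi (A : Matrix V V ℤ) (x : V → ℚ) : ℚ :=
  -(x ⬝ᵥ (Aq A).mulVec (x + Kcan A)) / 2

/-- The weight `w(l, J)` of the lattice cube `(l, J)`. -/
def wcube (A : Matrix V V ℤ) (l : V → ℤ) (J : Finset V) : ℚ :=
  J.powerset.sup' ⟨∅, Finset.empty_mem_powerset J⟩
    fun J' => chi A fun v => (l v : ℚ) + if v ∈ J' then 1 else 0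

/-- Quasipolynomials on `ℤ^W`: polynomial on each coset of a finite index subgroup. -/
def IsQuasiPoly {W : Type*} [Fintype W] (Q : (W → ℤ) → ℚ) : Prop :=
  ∃ Λ : AddSubgroup (W → ℤ), Λ.index ≠ 0 ∧
    ∀ c : W → ℤ, ∃ p : MvPolynomial W ℚ,
      ∀ l ∈ Λ, Q (c + l) = MvPolynomial.eval (fun w => ((c + l) w : ℚ)) p

/-- The vertex set of the connected component `c` of the complement of `I`. -/
def compSet (G : SimpleGraph V) (I : Set V) (c : (G.induce Iᶜ).ConnectedComponent) :
    Set V :=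
  {v : V | ∃ h : v ∈ (Iᶜ : Set V), (G.induce Iᶜ).connectedComponentMk ⟨v, h⟩ = c}

/-- The boundary of a subset `V2` of the vertices. -/
def Bdry (G : SimpleGraph V) (V2 : Set V) : Set V :=
  {u ∈ V2 | ∃ w, w ∉ V2 ∧ G.Adj u w}

/-- `V_{1,u}` : the vertex `u` together with the vertex sets of all connected
components of the complement of `V2` adjacent to `u`. -/
def V1u (G : SimpleGraph V) (V2 : Set V) (u : V) : Set V :=
  insert u {v : V | ∃ h : v ∈ (V2ᶜ : Set V), ∃ w, ∃ hw : w ∈ (V2ᶜ : Set V),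
    G.Adj u w ∧ (G.induce V2ᶜ).connectedComponentMk ⟨v, h⟩ =
      (G.induce V2ᶜ).connectedComponentMk ⟨w, hw⟩}

end Plumbing

open Plumbing

namespace Stmt15

open Finset

variable {V : Type*} [Fintype V] [DecidableEq V]

/-! ### ccoef basics -/

lemma ccoef_zero_right (d : ℕ) : ccoef d 0 = 1 := by
  unfold ccoef; split <;> simp

lemma ccoef_one_left (k : ℕ) : ccoef 1 k = 1 := by
  unfold ccoef
  rw [if_neg (by omega)]
  simp [Nat.add_sub_cancel, Nat.choose_self]

lemma ccoef_zero_left (k : ℕ) : ccoef 0 k = (k : ℤ) + 1 := by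
  unfold ccoef
  rw [if_neg (by omega)]
  simp [Nat.choose_succ_self_right]

lemma ccoef_succ (d k : ℕ) (hk : k ≠ 0) :
    ccoef (d + 1) k = ccoef d k - ccoef d (k - 1) := by
  obtain ⟨m, rfl⟩ := Nat.exists_eq_succ_of_ne_zero hk
  rcases Nat.lt_or_ge d 2 with hd | hd
  · interval_cases d
    · rw [show ccoef (0 + 1) (m + 1) = ccoef 1 (m + 1) from rfl, ccoef_one_left,
        ccoef_zero_left, show m + 1 - 1 = m from rfl, ccoef_zero_left]
      push_cast; ring
    · rw [show ccoef (1 + 1) (m + 1) = ccoef 2 (m + 1) from rfl, ccoef_one_left,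
        show m + 1 - 1 = m from rfl, ccoef_one_left]
      unfold ccoef
      rw [if_pos (by omega)]
      rw [Nat.choose_eq_zero_of_lt (show 2 - 2 < m + 1 by omega)]
      simp
  · obtain ⟨n, rfl⟩ := Nat.exists_eq_add_of_le hd
    unfold ccoef
    rw [if_pos (by omega), if_pos (by omega), if_pos (by omega)]
    have e1 : 2 + n + 1 - 2 = n + 1 := by omega
    have e2 : 2 + n - 2 = n := by omega
    have e3 : m + 1 - 1 = m := rfl
    rw [e1, e2, e3, Nat.choose_succ_succ n m]
    push_cast [pow_succ]
    ring

/-! ### the combinatorial quantities -/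

/-- Twice the number of edges of `G` inside `s`. -/
def DDq (G : SimpleGraph V) (s : Finset V) : ℚ :=
  ∑ v ∈ s, ∑ w ∈ s, if G.Adj v w then 1 else 0

def phiD (G : SimpleGraph V) (k : V → ℤ) (J : Finset V) : ℚ :=
  (∑ v ∈ J, ((k v : ℚ) + 1)) - DDq G J / 2

def FD (G : SimpleGraph V) (k : V → ℤ) (J : Finset V) : ℚ :=
  J.powerset.sup' ⟨∅, Finset.empty_mem_powerset J⟩ (phiD G k)

lemma DDq_insert (G : SimpleGraph V) {s : Finset V} {u : V} (hu : u ∉ s) :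
    DDq G (insert u s) = DDq G s + 2 * ∑ w ∈ s, (if G.Adj u w then (1:ℚ) else 0) := by
  unfold DDq
  rw [Finset.sum_insert hu]
  have h1 : ∀ v, ∑ w ∈ insert u s, (if G.Adj v w then (1:ℚ) else 0)
      = (if G.Adj v u then (1:ℚ) else 0) + ∑ w ∈ s, (if G.Adj v w then (1:ℚ) else 0) :=
    fun v => Finset.sum_insert hu
  rw [Finset.sum_congr rfl (fun v _ => h1 v), Finset.sum_add_distrib, h1 u]
  have h2 : ∑ v ∈ s, (if G.Adj v u then (1:ℚ) else 0)
      = ∑ v ∈ s, (if G.Adj u v then (1:ℚ) else 0) :=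
    Finset.sum_congr rfl (fun v _ => by rw [G.adj_comm])
  rw [if_neg (G.irrefl), h2]
  ring

lemma sum_ind_eq (G : SimpleGraph V) {W J : Finset V} {u u₀ : V}
    (hfil : W.filter (G.Adj u) = {u₀}) (hJ : J ⊆ W) :
    ∑ w ∈ J, (if G.Adj u w then (1:ℚ) else 0) = if u₀ ∈ J then 1 else 0 := by
  have key : ∀ w ∈ J, G.Adj u w ↔ w = u₀ := by
    intro w hw
    constructor
    · intro h
      have : w ∈ W.filter (G.Adj u) := Finset.mem_filter.2 ⟨hJ hw, h⟩
      rw [hfil] at this; exact Finset.mem_singleton.1 this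
    · intro hw₀
      have : u₀ ∈ W.filter (G.Adj u) := by rw [hfil]; exact Finset.mem_singleton_self _
      rw [hw₀]
      exact (Finset.mem_filter.1 this).2
  rw [Finset.sum_congr rfl (fun w hw => if_congr (key w hw) rfl rfl)]
  simp [Finset.sum_ite_eq' J u₀ (fun _ => (1:ℚ))]

lemma phiD_empty (G : SimpleGraph V) (k : V → ℤ) : phiD G k ∅ = 0 := by
  simp [phiD, DDq]

lemma phiD_update (G : SimpleGraph V) (k : V → ℤ) (u₀ : V) (J : Finset V) :
    phiD G (Function.update k u₀ (k u₀ - 1)) J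
      = phiD G k J - (if u₀ ∈ J then 1 else 0) := by
  unfold phiD
  have hsum : ∑ v ∈ J, ((Function.update k u₀ (k u₀ - 1) v : ℚ) + 1)
      = (∑ v ∈ J, ((k v : ℚ) + 1)) - (if u₀ ∈ J then 1 else 0) := by
    by_cases h : u₀ ∈ J
    · rw [if_pos h, ← Finset.add_sum_erase _ _ h, ← Finset.add_sum_erase _ (fun v => ((k v : ℚ) + 1)) h]
      have herase : ∑ v ∈ J.erase u₀, ((Function.update k u₀ (k u₀ - 1) v : ℚ) + 1)
          = ∑ v ∈ J.erase u₀, ((k v : ℚ) + 1) := by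
        refine Finset.sum_congr rfl (fun v hv => ?_)
        rw [Function.update_of_ne (Finset.mem_erase.1 hv).1]
      rw [herase, Function.update_self]
      push_cast; ring
    · rw [if_neg h, sub_zero]
      refine Finset.sum_congr rfl (fun v hv => ?_)
      rw [Function.update_of_ne (by rintro rfl; exact h hv)]
  rw [hsum]; ring

lemma phiD_insert (G : SimpleGraph V) (k : V → ℤ) {W : Finset V} {u u₀ : V}
    (hfil : W.filter (G.Adj u) = {u₀}) {J : Finset V} (hJ : J ⊆ W.erase u) :
    phiD G k (insert u J)
      = ((k u : ℚ) + 1) + phiD G (Function.update k u₀ (k u₀ - 1)) J := by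
  have hu : u ∉ J := fun h => (Finset.mem_erase.1 (hJ h)).1 rfl
  have hJW : J ⊆ W := hJ.trans (Finset.erase_subset _ _)
  rw [phiD_update]
  unfold phiD
  rw [Finset.sum_insert hu, DDq_insert G hu, sum_ind_eq G hfil hJW]
  ring

lemma sup'_const_add {β : Type*} {s : Finset β} (h : s.Nonempty) (c : ℚ) (f : β → ℚ) :
    s.sup' h (fun b => c + f b) = c + s.sup' h f := by
  rw [Finset.comp_sup'_eq_sup'_comp h (fun x : ℚ => c + x)
    (fun x y => (max_add_add_left c x y).symm)]
  rfl

lemma sup'_powerset_insert {α : Type*} [DecidableEq α] {s : Finset α} {a : α} (ha : a ∉ s)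
    (f : Finset α → ℚ) :
    (insert a s).powerset.sup' ⟨∅, Finset.empty_mem_powerset _⟩ f
      = max (s.powerset.sup' ⟨∅, Finset.empty_mem_powerset _⟩ f)
            (s.powerset.sup' ⟨∅, Finset.empty_mem_powerset _⟩ (fun J => f (insert a J))) := by
  apply le_antisymm
  · refine Finset.sup'_le _ _ (fun J hJ => ?_)
    rw [Finset.mem_powerset] at hJ
    by_cases haJ : a ∈ J
    · refine le_max_of_le_right ?_
      have hJe : J.erase a ⊆ s := by
        intro x hx
        rcases Finset.mem_insert.1 (hJ (Finset.mem_of_mem_erase hx)) with h | h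
        · exact absurd h (Finset.mem_erase.1 hx).1
        · exact h
      have : J = insert a (J.erase a) := (Finset.insert_erase haJ).symm
      rw [this]
      exact Finset.le_sup' (fun J => f (insert a J)) (Finset.mem_powerset.2 hJe)
    · refine le_max_of_le_left ?_
      refine Finset.le_sup' f (Finset.mem_powerset.2 (fun x hx => ?_))
      rcases Finset.mem_insert.1 (hJ hx) with h | h
      · exact absurd (h ▸ hx) haJ
      · exact h
  · refine max_le ?_ ?_
    · refine Finset.sup'_le _ _ (fun J hJ => Finset.le_sup' f (Finset.mem_powerset.2 ?_))
      exact (Finset.mem_powerset.1 hJ).trans (Finset.subset_insert _ _)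
    · refine Finset.sup'_le _ _ (fun J hJ => Finset.le_sup' f (Finset.mem_powerset.2 ?_))
      exact Finset.insert_subset_insert _ (Finset.mem_powerset.1 hJ)

lemma FD_insert (G : SimpleGraph V) (k : V → ℤ) {W : Finset V} {u u₀ : V}
    (hfil : W.filter (G.Adj u) = {u₀}) {J : Finset V} (hJ : J ⊆ W.erase u) :
    FD G k (insert u J)
      = max (FD G k J)
          (((k u : ℚ) + 1) + FD G (Function.update k u₀ (k u₀ - 1)) J) := by
  have hu : u ∉ J := fun h => (Finset.mem_erase.1 (hJ h)).1 rfl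
  unfold FD
  rw [sup'_powerset_insert hu (phiD G k)]
  congr 1
  have hcong : (J.powerset).sup' ⟨∅, Finset.empty_mem_powerset _⟩
        (fun J' => phiD G k (insert u J'))
      = (J.powerset).sup' ⟨∅, Finset.empty_mem_powerset _⟩
          (fun J' => ((k u : ℚ) + 1) + phiD G (Function.update k u₀ (k u₀ - 1)) J') :=
    Finset.sup'_congr _ rfl (fun J' hJ' =>
      phiD_insert G k hfil ((Finset.mem_powerset.1 hJ').trans hJ))
  rw [hcong]; exact sup'_const_add _ _ _

lemma FD_update_le (G : SimpleGraph V) (k : V → ℤ) (u₀ : V) (J : Finset V) :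
    FD G (Function.update k u₀ (k u₀ - 1)) J ≤ FD G k J := by
  refine Finset.sup'_mono_fun (fun J' _ => ?_)
  rw [phiD_update]
  split <;> linarith

lemma FD_le_update_add_one (G : SimpleGraph V) (k : V → ℤ) (u₀ : V) (J : Finset V) :
    FD G k J ≤ FD G (Function.update k u₀ (k u₀ - 1)) J + 1 := by
  refine Finset.sup'_le _ _ (fun J' hJ' => ?_)
  have h1 : phiD G (Function.update k u₀ (k u₀ - 1)) J'
      ≤ FD G (Function.update k u₀ (k u₀ - 1)) J := Finset.le_sup' _ hJ'
  have h2 := phiD_update G k u₀ J'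
  split at h2 <;> linarith

lemma FD_empty (G : SimpleGraph V) (k : V → ℤ) : FD G k ∅ = 0 := by
  have h : FD G k ∅ = phiD G k ∅ := by
    refine le_antisymm (Finset.sup'_le _ _ (fun J' hJ' => ?_))
      (Finset.le_sup' _ (Finset.empty_mem_powerset (∅ : Finset V)))
    rw [Finset.subset_empty.1 (Finset.mem_powerset.1 hJ')]
  rw [h, phiD_empty]

lemma DDq_eq_sum_card (G : SimpleGraph V) (W : Finset V) :
    DDq G W = ∑ v ∈ W, ((W.filter (G.Adj v)).card : ℚ) := by
  unfold DDq
  refine Finset.sum_congr rfl (fun v _ => ?_)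
  rw [Finset.card_filter]
  push_cast
  exact Finset.sum_congr rfl (fun w _ => by split <;> simp)

/-! ### walks avoiding a leaf -/

lemma walk_avoid (G : SimpleGraph V) {W : Finset V} {u u₀ : V}
    (hfil : W.filter (G.Adj u) = {u₀}) :
    ∀ (n : ℕ) (v w : V), v ≠ u → w ≠ u → ∀ p : G.Walk v w, p.length ≤ n →
      (∀ x ∈ p.support, x ∈ W) → ∃ q : G.Walk v w, ∀ x ∈ q.support, x ∈ W.erase u := by
  have hadj : ∀ x ∈ W, G.Adj u x → x = u₀ := by
    intro x hx h
    have : x ∈ W.filter (G.Adj u) := Finset.mem_filter.2 ⟨hx, h⟩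
    rw [hfil] at this; exact Finset.mem_singleton.1 this
  intro n
  induction n with
  | zero =>
      intro v w hv hw p hlen hsup
      cases p with
      | nil =>
          refine ⟨SimpleGraph.Walk.nil, ?_⟩
          intro x hx
          rw [SimpleGraph.Walk.support_nil, List.mem_singleton] at hx
          subst hx
          exact Finset.mem_erase.2 ⟨hv, hsup _ (SimpleGraph.Walk.start_mem_support _)⟩
      | cons h q => simp at hlen
  | succ n ih =>
      intro v w hv hw p hlen hsup
      cases p with
      | nil =>
          refine ⟨SimpleGraph.Walk.nil, ?_⟩
          intro x hx
          rw [SimpleGraph.Walk.support_nil, List.mem_singleton] at hx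
          subst hx
          exact Finset.mem_erase.2 ⟨hv, hsup _ (SimpleGraph.Walk.start_mem_support _)⟩
      | @cons _ y _ h p' =>
          by_cases hy : y = u
          · subst hy
            cases p' with
            | nil => exact absurd rfl hw
            | @cons _ z _ h₂ p'' =>
                have hzW : z ∈ W := by
                  apply hsup
                  rw [SimpleGraph.Walk.support_cons, SimpleGraph.Walk.support_cons]
                  exact List.mem_cons_of_mem _ (List.mem_cons_of_mem _
                    (SimpleGraph.Walk.start_mem_support _))
                have hvW : v ∈ W := hsup v (SimpleGraph.Walk.start_mem_support _)
                have hz : z = u₀ := hadj z hzW h₂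
                have hvu₀ : v = u₀ := hadj v hvW (h.symm)
                have hzv : z = v := by rw [hz, hvu₀]
                refine ih v w hv hw (p''.copy hzv rfl) ?_ ?_
                · rw [SimpleGraph.Walk.length_copy]
                  have : (SimpleGraph.Walk.cons h (SimpleGraph.Walk.cons h₂ p'')).length
                      = p''.length + 2 := by
                    simp [SimpleGraph.Walk.length_cons]
                  omega
                · intro x hx
                  rw [SimpleGraph.Walk.support_copy] at hx
                  apply hsup
                  rw [SimpleGraph.Walk.support_cons, SimpleGraph.Walk.support_cons]
                  exact List.mem_cons_of_mem _ (List.mem_cons_of_mem _ hx)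
          · obtain ⟨q', hq'⟩ := ih y w hy hw p'
              (by simp [SimpleGraph.Walk.length_cons] at hlen ⊢; omega)
              (fun x hx => hsup x (by rw [SimpleGraph.Walk.support_cons]; exact List.mem_cons_of_mem _ hx))
            refine ⟨SimpleGraph.Walk.cons h q', ?_⟩
            intro x hx
            rw [SimpleGraph.Walk.support_cons] at hx
            rcases List.mem_cons.1 hx with rfl | hx
            · exact Finset.mem_erase.2 ⟨hv, hsup x (SimpleGraph.Walk.start_mem_support _)⟩
            · exact hq' x hx

/-! ### the main combinatorial identity on trees -/

lemma powerset_sign_sum {W : Finset V} (hW : W.Nonempty) :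
    ∑ J ∈ W.powerset, (-1 : ℚ) ^ J.card = 0 := by
  have h := Finset.sum_powerset_neg_one_pow_card_of_nonempty hW
  have : ((∑ J ∈ W.powerset, (-1 : ℤ) ^ J.card : ℤ) : ℚ)
      = ∑ J ∈ W.powerset, (-1 : ℚ) ^ J.card := by
    push_cast; rfl
  rw [← this, h, Int.cast_zero]

lemma stepD (G : SimpleGraph V) : ∀ W : Finset V, W.Nonempty →
    (∀ v ∈ W, ∀ w ∈ W, ∃ p : G.Walk v w, ∀ x ∈ p.support, x ∈ W) →
    (DDq G W + 2 = 2 * W.card) →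
    ∀ k : V → ℤ,
    ∑ J ∈ W.powerset, (-1:ℚ)^(J.card+1) * FD G k J
      = if ∀ v ∈ W, 0 ≤ k v then
          ∏ v ∈ W, ((ccoef ((W.filter (G.Adj v)).card) ((k v).toNat) : ℤ) : ℚ)
        else 0 := by
  intro W
  induction W using Finset.strongInduction with
  | _ W IH =>
    intro hW hconn hedge k
    rcases Nat.lt_or_ge W.card 2 with hcard | hcard
    · -- base case : a single vertex
      have hc1 : W.card = 1 := by
        have := Finset.card_pos.2 hW; omega
      obtain ⟨v, rfl⟩ := Finset.card_eq_one.1 hc1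
      have hDD : ∀ J : Finset V, J ⊆ {v} → DDq G J = 0 := by
        intro J hJ
        unfold DDq
        refine Finset.sum_eq_zero (fun x hx => Finset.sum_eq_zero (fun y hy => ?_))
        have hx' := Finset.mem_singleton.1 (hJ hx)
        have hy' := Finset.mem_singleton.1 (hJ hy)
        rw [if_neg]
        rw [hx', hy']
        exact G.irrefl
      have hdeg : ({v} : Finset V).filter (G.Adj v) = ∅ := by
        ext w
        simp only [Finset.mem_filter, Finset.mem_singleton, Finset.notMem_empty, iff_false,
          not_and]
        rintro rfl
        exact fun h => G.irrefl h
      have hpow : ({v} : Finset V).powerset = {∅, {v}} := by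
        ext J
        simp [Finset.subset_singleton_iff]
      have hFDv : FD G k {v} = max 0 ((k v : ℚ) + 1) := by
        unfold FD
        refine le_antisymm (Finset.sup'_le _ _ (fun J hJ => ?_)) ?_
        · rw [Finset.mem_powerset] at hJ
          rcases Finset.subset_singleton_iff.1 hJ with rfl | rfl
          · rw [phiD_empty]; exact le_max_left _ _
          · refine le_max_of_le_right ?_
            rw [phiD, hDD {v} (by rfl), Finset.sum_singleton]
            simp
        · refine max_le ?_ ?_
          · have := Finset.le_sup' (phiD G k) (Finset.empty_mem_powerset ({v} : Finset V))
            rw [phiD_empty] at this; exact this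
          · have := Finset.le_sup' (phiD G k) (Finset.mem_powerset.2 (le_refl ({v} : Finset V)))
            rw [phiD, hDD {v} (by rfl), Finset.sum_singleton] at this
            simpa using this
      rw [hpow, Finset.sum_pair ((Finset.singleton_ne_empty v).symm), FD_empty, hFDv,
        Finset.prod_singleton, hdeg, Finset.card_empty, Finset.card_singleton]
      by_cases hk : 0 ≤ k v
      · rw [if_pos ?hpos]
        case hpos => intro x hx; rw [Finset.mem_singleton.1 hx]; exact hk
        rw [max_eq_right (by exact_mod_cast (by omega : (0:ℤ) ≤ k v + 1) : (0:ℚ) ≤ (k v : ℚ) + 1)]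
        rw [ccoef_zero_left]
        push_cast [Int.toNat_of_nonneg hk]
        ring
      · rw [if_neg ?hneg]
        case hneg => push_neg; exact ⟨v, Finset.mem_singleton_self v, lt_of_not_ge hk⟩
        rw [max_eq_left (by exact_mod_cast (by omega : k v + 1 ≤ (0:ℤ)) : (k v : ℚ) + 1 ≤ 0)]
        ring
    · -- inductive step : at least two vertices, find a leaf u
      have hdeg1 : ∀ v ∈ W, 1 ≤ (W.filter (G.Adj v)).card := by
        intro v hv
        obtain ⟨w, hw, hwv⟩ := Finset.exists_mem_ne (s := W) (by omega) v
        obtain ⟨p, hp⟩ := hconn v hv w hw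
        cases p with
        | nil => exact absurd rfl hwv.symm.symm
        | cons h q =>
            rename_i y
            refine Finset.card_pos.2 ⟨y, Finset.mem_filter.2 ⟨?_, h⟩⟩
            apply hp y
            rw [SimpleGraph.Walk.support_cons]
            exact List.mem_cons_of_mem _ (SimpleGraph.Walk.start_mem_support _)
      have hleaf : ∃ u ∈ W, (W.filter (G.Adj u)).card = 1 := by
        by_contra hcon
        push_neg at hcon
        have h2 : ∀ v ∈ W, 2 ≤ (W.filter (G.Adj v)).card := by
          intro v hv
          have := hdeg1 v hv
          have := hcon v hv
          omega
        have hge : (2 * W.card : ℚ) ≤ DDq G W := by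
          rw [DDq_eq_sum_card]
          calc (2 * W.card : ℚ) = ∑ _v ∈ W, (2 : ℚ) := by
                rw [Finset.sum_const, nsmul_eq_mul]; ring
            _ ≤ _ := Finset.sum_le_sum (fun v hv => by exact_mod_cast h2 v hv)
        linarith
      obtain ⟨u, huW, hdegu⟩ := hleaf
      obtain ⟨u₀, hfil⟩ := Finset.card_eq_one.1 hdegu
      have hu₀mem : u₀ ∈ W.filter (G.Adj u) := by
        rw [hfil]; exact Finset.mem_singleton_self _
      have hu₀W : u₀ ∈ W := (Finset.mem_filter.1 hu₀mem).1
      have hadj : G.Adj u u₀ := (Finset.mem_filter.1 hu₀mem).2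
      have hu₀u : u₀ ≠ u := fun h => G.irrefl (h ▸ hadj)
      have hW'ss : W.erase u ⊂ W := Finset.erase_ssubset huW
      have hu₀W' : u₀ ∈ W.erase u := Finset.mem_erase.2 ⟨hu₀u, hu₀W⟩
      have hW'ne : (W.erase u).Nonempty := ⟨u₀, hu₀W'⟩
      have huW' : u ∉ W.erase u := Finset.notMem_erase u W
      have hWins : W = insert u (W.erase u) := (Finset.insert_erase huW).symm
      have hfil' : (W.erase u).filter (G.Adj u) = {u₀} := by
        rw [Finset.filter_erase, hfil, Finset.erase_eq_of_notMem
          (by rw [Finset.mem_singleton]; exact fun h => hu₀u h.symm)]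
      have hcardW' : ((W.erase u).card : ℚ) = (W.card : ℚ) - 1 := by
        rw [Finset.card_erase_of_mem huW]
        have : 1 ≤ W.card := Finset.card_pos.2 hW
        push_cast [Nat.cast_sub this]
        ring
      have hedge' : DDq G (W.erase u) + 2 = 2 * (W.erase u).card := by
        have h1 : DDq G W = DDq G (W.erase u) + 2 := by
          conv_lhs => rw [hWins]
          rw [DDq_insert G huW', sum_ind_eq G hfil' (le_refl _), if_pos hu₀W']
          ring
        rw [h1] at hedge
        rw [hcardW']
        linarith
      have hconn' : ∀ v ∈ W.erase u, ∀ w ∈ W.erase u,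
          ∃ p : G.Walk v w, ∀ x ∈ p.support, x ∈ W.erase u := by
        intro v hv w hw
        obtain ⟨p, hp⟩ := hconn v (Finset.mem_of_mem_erase hv) w (Finset.mem_of_mem_erase hw)
        exact walk_avoid G hfil p.length v w (Finset.mem_erase.1 hv).1
          (Finset.mem_erase.1 hw).1 p le_rfl hp
      have hIH := IH (W.erase u) hW'ss hW'ne hconn' hedge' k
      have hIH' := IH (W.erase u) hW'ss hW'ne hconn' hedge'
        (Function.update k u₀ (k u₀ - 1))
      -- split the sum over subsets of W according to membership of u
      have hdisj : Disjoint (W.erase u).powerset ((W.erase u).powerset.image (insert u)) := by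
        rw [Finset.disjoint_left]
        intro J hJ hJ'
        obtain ⟨J₀, _, rfl⟩ := Finset.mem_image.1 hJ'
        exact huW' (Finset.mem_powerset.1 hJ (Finset.mem_insert_self u J₀))
      have hsplit : ∑ J ∈ W.powerset, (-1:ℚ)^(J.card+1) * FD G k J
          = ∑ J ∈ (W.erase u).powerset,
              ((-1:ℚ)^(J.card+1) * FD G k J + (-1:ℚ)^((insert u J).card+1) * FD G k (insert u J)) := by
        conv_lhs => rw [hWins]
        rw [Finset.powerset_insert, Finset.sum_union hdisj, Finset.sum_image ?hinj,
          ← Finset.sum_add_distrib]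
        case hinj =>
          intro a ha b hb hab
          have ha' : u ∉ a := fun h => huW' (Finset.mem_powerset.1 ha h)
          have hb' : u ∉ b := fun h => huW' (Finset.mem_powerset.1 hb h)
          rw [← Finset.erase_insert ha', ← Finset.erase_insert hb', hab]
      rw [hsplit]
      have hterm : ∀ J ∈ (W.erase u).powerset,
          (-1:ℚ)^(J.card+1) * FD G k J + (-1:ℚ)^((insert u J).card+1) * FD G k (insert u J)
            = (-1:ℚ)^(J.card+1) * FD G k J
              + (-1:ℚ)^(J.card) * max (FD G k J)
                  (((k u : ℚ)+1) + FD G (Function.update k u₀ (k u₀ - 1)) J) := by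
        intro J hJ
        have huJ : u ∉ J := fun h => huW' (Finset.mem_powerset.1 hJ h)
        rw [Finset.card_insert_of_notMem huJ, FD_insert G k hfil (Finset.mem_powerset.1 hJ)]
        rw [show J.card + 1 + 1 = J.card + 2 from rfl, pow_add, pow_add]
        ring
      rw [Finset.sum_congr rfl hterm]
      by_cases hku : 0 ≤ k u
      · -- the leaf coefficient is positive
        have hmax : ∀ J ∈ (W.erase u).powerset,
            max (FD G k J) (((k u : ℚ)+1) + FD G (Function.update k u₀ (k u₀ - 1)) J)
              = ((k u : ℚ)+1) + FD G (Function.update k u₀ (k u₀ - 1)) J := by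
          intro J _
          apply max_eq_right
          have h1 := FD_le_update_add_one G k u₀ J
          have h2 : (1:ℚ) ≤ (k u : ℚ) + 1 := by exact_mod_cast (by omega : (1:ℤ) ≤ k u + 1)
          linarith
        rw [Finset.sum_congr rfl (fun J hJ => by rw [hmax J hJ])]
        have hexp : ∑ J ∈ (W.erase u).powerset,
            ((-1:ℚ)^(J.card+1) * FD G k J
              + (-1:ℚ)^(J.card) * (((k u : ℚ)+1) + FD G (Function.update k u₀ (k u₀ - 1)) J))
            = (∑ J ∈ (W.erase u).powerset, (-1:ℚ)^(J.card+1) * FD G k J)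
              + ((k u : ℚ)+1) * (∑ J ∈ (W.erase u).powerset, (-1:ℚ)^(J.card))
              - (∑ J ∈ (W.erase u).powerset, (-1:ℚ)^(J.card+1)
                  * FD G (Function.update k u₀ (k u₀ - 1)) J) := by
          rw [Finset.mul_sum, ← Finset.sum_add_distrib, ← Finset.sum_sub_distrib]
          refine Finset.sum_congr rfl (fun J _ => ?_)
          rw [pow_succ]
          ring
        rw [hexp, powerset_sign_sum hW'ne, hIH, hIH']
        rw [mul_zero, add_zero]
        -- now prove the if/product identity
        have hkle : ∀ v, Function.update k u₀ (k u₀ - 1) v ≤ k v := by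
          intro v
          by_cases hv : v = u₀
          · subst hv; rw [Function.update_self]; omega
          · rw [Function.update_of_ne hv]
        have hdWu : ∀ v ∈ W.erase u, (W.filter (G.Adj v)).card
            = ((W.erase u).filter (G.Adj v)).card + (if v = u₀ then 1 else 0) := by
          intro v hv
          have hvu : v ≠ u := (Finset.mem_erase.1 hv).1
          have hadjvu : G.Adj v u ↔ v = u₀ := by
            rw [G.adj_comm]
            constructor
            · intro h
              have : v ∈ W.filter (G.Adj u) :=
                Finset.mem_filter.2 ⟨Finset.mem_of_mem_erase hv, h⟩
              rw [hfil] at this; exact Finset.mem_singleton.1 this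
            · intro h; subst h; exact hadj
          conv_lhs => rw [hWins]
          rw [Finset.filter_insert]
          by_cases hAvu : G.Adj v u
          · rw [if_pos hAvu, if_pos (hadjvu.1 hAvu),
              Finset.card_insert_of_notMem (fun h => huW' (Finset.filter_subset _ _ h))]
          · rw [if_neg hAvu, if_neg (fun h => hAvu (hadjvu.2 h)), add_zero]
        by_cases hC : ∀ v ∈ W.erase u, 0 ≤ k v
        · have hCW : ∀ v ∈ W, 0 ≤ k v := by
            intro v hv
            by_cases hvu : v = u
            · subst hvu; exact hku
            · exact hC v (Finset.mem_erase.2 ⟨hvu, hv⟩)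
          rw [if_pos hC, if_pos hCW]
          have hprodW : ∏ v ∈ W, ((ccoef ((W.filter (G.Adj v)).card) ((k v).toNat) : ℤ) : ℚ)
              = ((ccoef 1 ((k u).toNat) : ℤ) : ℚ)
                * ∏ v ∈ W.erase u, ((ccoef ((W.filter (G.Adj v)).card) ((k v).toNat) : ℤ) : ℚ) := by
            rw [← Finset.mul_prod_erase W _ huW, hdegu]
          rw [hprodW, ccoef_one_left, Int.cast_one, one_mul]
          by_cases hku₀ : 1 ≤ k u₀
          · have hC' : ∀ v ∈ W.erase u, 0 ≤ Function.update k u₀ (k u₀ - 1) v := by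
              intro v hv
              by_cases hv₀ : v = u₀
              · subst hv₀; rw [Function.update_self]; omega
              · rw [Function.update_of_ne hv₀]; exact hC v hv
            rw [if_pos hC']
            rw [← Finset.mul_prod_erase _ _ hu₀W',
              ← Finset.mul_prod_erase _ _ hu₀W',
              ← Finset.mul_prod_erase _ _ hu₀W']
            have hrest : ∀ v ∈ (W.erase u).erase u₀,
                (((ccoef (((W.erase u).filter (G.Adj v)).card)
                  ((Function.update k u₀ (k u₀ - 1) v).toNat) : ℤ) : ℚ))
                = ((ccoef ((W.filter (G.Adj v)).card) ((k v).toNat) : ℤ) : ℚ) := by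
              intro v hv
              have hv₀ : v ≠ u₀ := (Finset.mem_erase.1 hv).1
              rw [Function.update_of_ne hv₀, hdWu v (Finset.mem_of_mem_erase hv),
                if_neg hv₀, add_zero]
            have hrest2 : ∀ v ∈ (W.erase u).erase u₀,
                (((ccoef (((W.erase u).filter (G.Adj v)).card) ((k v).toNat) : ℤ) : ℚ))
                = ((ccoef ((W.filter (G.Adj v)).card) ((k v).toNat) : ℤ) : ℚ) := by
              intro v hv
              have hv₀ : v ≠ u₀ := (Finset.mem_erase.1 hv).1
              rw [hdWu v (Finset.mem_of_mem_erase hv), if_neg hv₀, add_zero]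
            rw [Finset.prod_congr rfl hrest, Finset.prod_congr rfl hrest2]
            rw [← sub_mul]
            congr 1
            rw [hdWu u₀ hu₀W', if_pos rfl, Function.update_self]
            rw [ccoef_succ _ _ (by omega : (k u₀).toNat ≠ 0)]
            rw [show (k u₀ - 1).toNat = (k u₀).toNat - 1 by omega]
            push_cast
            ring
          · -- k u₀ = 0
            have hku₀0 : k u₀ = 0 := by
              have := hC u₀ hu₀W'; omega
            have hC' : ¬ ∀ v ∈ W.erase u, 0 ≤ Function.update k u₀ (k u₀ - 1) v := by
              push_neg
              exact ⟨u₀, hu₀W', by rw [Function.update_self]; omega⟩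
            rw [if_neg hC', sub_zero]
            refine Finset.prod_congr rfl (fun v hv => ?_)
            by_cases hv₀ : v = u₀
            · subst hv₀
              rw [hdWu v hu₀W', if_pos rfl, hku₀0]
              simp [ccoef_zero_right]
            · rw [hdWu v hv, if_neg hv₀, add_zero]
        · have hC' : ¬ ∀ v ∈ W.erase u, 0 ≤ Function.update k u₀ (k u₀ - 1) v := by
            intro h
            exact hC (fun v hv => le_trans (h v hv) (hkle v))
          have hCW : ¬ ∀ v ∈ W, 0 ≤ k v := by
            intro h
            exact hC (fun v hv => h v (Finset.mem_of_mem_erase hv))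
          rw [if_neg hC, if_neg hC', if_neg hCW]
          ring
      · -- the leaf coefficient is negative : everything vanishes
        have hmax : ∀ J ∈ (W.erase u).powerset,
            max (FD G k J) (((k u : ℚ)+1) + FD G (Function.update k u₀ (k u₀ - 1)) J)
              = FD G k J := by
          intro J _
          apply max_eq_left
          have h1 := FD_update_le G k u₀ J
          have h2 : (k u : ℚ) + 1 ≤ 0 := by exact_mod_cast (by omega : k u + 1 ≤ (0:ℤ))
          linarith
        rw [Finset.sum_congr rfl (fun J hJ => by rw [hmax J hJ])]
        rw [if_neg (by push_neg; exact ⟨u, huW, lt_of_not_ge hku⟩)]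
        refine Finset.sum_eq_zero (fun J _ => ?_)
        rw [pow_succ]
        ring


/-! ### the lattice-theoretic side -/

lemma det_ne_zero {A : Matrix V V ℤ} (hA : NegDef A) : (Aq A).det ≠ 0 := by
  intro h
  obtain ⟨x, hx0, hx⟩ := Matrix.exists_mulVec_eq_zero_iff.2 h
  have h2 := hA x hx0
  rw [hx, dotProduct_zero] at h2
  exact lt_irrefl 0 h2

lemma Aq_mulVec_cast (A : Matrix V V ℤ) (l : V → ℤ) :
    (Aq A) *ᵥ (fun v => (l v : ℚ)) = fun v => ((A *ᵥ l) v : ℚ) := by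
  funext v
  simp only [Matrix.mulVec, dotProduct, Aq, Matrix.map_apply]
  push_cast
  rfl

lemma zcoef_eq {A : Matrix V V ℤ} (hA : NegDef A) (δ : V → ℕ) (l : V → ℤ) :
    zcoef A δ (fun v => (l v : ℚ))
      = if ∀ v, 0 ≤ -(A *ᵥ l) v then ∏ v, ccoef (δ v) ((-(A *ᵥ l) v).toNat) else 0 := by
  have hdet : IsUnit (Aq A).det := isUnit_iff_ne_zero.2 (det_ne_zero hA)
  have hcond : ∀ k : V → ℕ, ((∑ v, ((k v : ℚ)) • Estar A v) = fun v => (l v : ℚ))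
      ↔ (∀ v, (k v : ℤ) = -(A *ᵥ l) v) := by
    intro k
    have hsum : (∑ v, ((k v : ℚ)) • Estar A v) = (-(Aq A)⁻¹) *ᵥ (fun v => (k v : ℚ)) := by
      funext w
      simp only [Finset.sum_apply, Pi.smul_apply, smul_eq_mul, Matrix.mulVec,
        dotProduct, Estar]
      exact Finset.sum_congr rfl (fun v _ => mul_comm _ _)
    rw [hsum]
    constructor
    · intro h
      have h2 := congrArg (fun y => (Aq A) *ᵥ y) h
      rw [Matrix.mulVec_mulVec, Matrix.mul_neg, Matrix.mul_nonsing_inv _ hdet,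
        Matrix.neg_mulVec, Matrix.one_mulVec, Aq_mulVec_cast] at h2
      intro v
      have h3 := congrFun h2 v
      simp only [Pi.neg_apply] at h3
      have h4 : (k v : ℚ) = -((A *ᵥ l) v : ℚ) := by rw [← h3]; ring
      exact_mod_cast h4
    · intro h
      have hk : (fun v => (k v : ℚ)) = -((Aq A) *ᵥ (fun v => (l v : ℚ))) := by
        funext v
        rw [Aq_mulVec_cast A l]
        show ((k v : ℚ)) = -(((A *ᵥ l) v : ℚ))
        exact_mod_cast congrArg (fun z : ℤ => (z : ℚ)) (h v)
      rw [hk, Matrix.mulVec_neg, Matrix.neg_mulVec, neg_neg, Matrix.mulVec_mulVec,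
        Matrix.nonsing_inv_mul _ hdet, Matrix.one_mulVec]
  unfold zcoef
  by_cases hpos : ∀ v, 0 ≤ -(A *ᵥ l) v
  · rw [if_pos hpos]
    rw [finsum_eq_single _ (fun v => (-(A *ᵥ l) v).toNat) ?_]
    · rw [if_pos ((hcond _).2 (fun v => by
        have := hpos v
        show (((-(A *ᵥ l) v).toNat : ℤ)) = -(A *ᵥ l) v
        omega))]
    · intro k hk
      rw [if_neg]
      intro hc
      apply hk
      funext v
      have h1 := (hcond k).1 hc v
      have h2 := hpos v
      omega
  · rw [if_neg hpos]
    refine finsum_eq_zero_of_forall_eq_zero (fun k => ?_)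
    rw [if_neg]
    intro hc
    apply hpos
    intro v
    rw [← (hcond k).1 hc v]
    exact Int.natCast_nonneg _

lemma mulVec_Kcan {A : Matrix V V ℤ} (hA : NegDef A) :
    (Aq A) *ᵥ (Kcan A) = fun v => (-2 : ℚ) - (A v v : ℚ) := by
  unfold Kcan
  rw [Matrix.mulVec_mulVec, Matrix.mul_nonsing_inv _ (isUnit_iff_ne_zero.2 (det_ne_zero hA)),
    Matrix.one_mulVec]

lemma chi_diff {A : Matrix V V ℤ} (hA : NegDef A) (hAsymm : A.IsSymm)
    (G : SimpleGraph V) (hAadj : ∀ v w : V, v ≠ w → A v w = if G.Adj v w then 1 else 0)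
    (l : V → ℤ) (J : Finset V) :
    chi A (fun v => (l v : ℚ) + if v ∈ J then 1 else 0)
      = chi A (fun v => (l v : ℚ)) + phiD G (fun v => -(A *ᵥ l) v) J := by
  set c : V → ℚ := fun v => (l v : ℚ) with hc
  set e : V → ℚ := fun v => if v ∈ J then 1 else 0 with he
  set g : V → ℚ := fun v => (-2 : ℚ) - (A v v : ℚ) with hg
  have harg : (fun v => (l v : ℚ) + if v ∈ J then 1 else 0) = c + e := rfl
  have hsymQ : ∀ x y : V → ℚ, x ⬝ᵥ (Aq A) *ᵥ y = y ⬝ᵥ (Aq A) *ᵥ x := by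
    intro x y
    simp only [Matrix.mulVec, dotProduct, Finset.mul_sum]
    rw [Finset.sum_comm]
    refine Finset.sum_congr rfl (fun v _ => Finset.sum_congr rfl (fun w _ => ?_))
    have hvw : A w v = A v w := by
      have := congrFun (congrFun hAsymm v) w
      simpa [Matrix.transpose_apply] using this
    have h2 : Aq A w v = Aq A v w := by
      simp only [Aq, Matrix.map_apply, hvw]
    rw [h2]; ring
  have hchi : ∀ x : V → ℚ, chi A x = -(x ⬝ᵥ (Aq A) *ᵥ x + x ⬝ᵥ g) / 2 := by
    intro x
    unfold chi
    rw [Matrix.mulVec_add, dotProduct_add, mulVec_Kcan hA]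
  have hedot : ∀ x : V → ℚ, e ⬝ᵥ x = ∑ v ∈ J, x v := by
    intro x
    simp only [dotProduct, he, ite_mul, one_mul, zero_mul]
    rw [Finset.sum_ite_mem, Finset.univ_inter]
  have hMe : ∀ v, ((Aq A) *ᵥ e) v = ∑ w ∈ J, (A v w : ℚ) := by
    intro v
    simp only [Matrix.mulVec, dotProduct, he, mul_ite, mul_one, mul_zero]
    rw [Finset.sum_ite_mem, Finset.univ_inter]
    exact Finset.sum_congr rfl (fun w _ => rfl)
  have hMc : (Aq A) *ᵥ c = fun v => ((A *ᵥ l) v : ℚ) := Aq_mulVec_cast A l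
  have hee : e ⬝ᵥ (Aq A) *ᵥ e = (∑ v ∈ J, (A v v : ℚ)) + DDq G J := by
    rw [hedot]
    rw [Finset.sum_congr rfl (fun v _ => hMe v)]
    unfold DDq
    rw [← Finset.sum_add_distrib]
    refine Finset.sum_congr rfl (fun v hv => ?_)
    rw [← Finset.add_sum_erase _ _ hv]
    congr 1
    rw [← Finset.sum_erase J (by rw [if_neg (G.irrefl)] : (if G.Adj v v then (1:ℚ) else 0) = 0)]
    refine Finset.sum_congr rfl (fun w hw => ?_)
    have hwv : v ≠ w := fun h => (Finset.mem_erase.1 hw).1 h.symm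
    rw [hAadj v w hwv]
    split <;> simp
  have hec : e ⬝ᵥ (Aq A) *ᵥ c = ∑ v ∈ J, ((A *ᵥ l) v : ℚ) := by
    rw [hMc, hedot]
  have heg : e ⬝ᵥ g = ∑ v ∈ J, ((-2 : ℚ) - (A v v : ℚ)) := hedot g
  rw [harg, hchi, hchi]
  rw [Matrix.mulVec_add, dotProduct_add,
    add_dotProduct, add_dotProduct, add_dotProduct]
  rw [hsymQ c e]
  have hphi : phiD G (fun v => -(A *ᵥ l) v) J
      = (∑ v ∈ J, (-((A *ᵥ l) v : ℚ) + 1)) - DDq G J / 2 := by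
    unfold phiD
    congr 1
  have hS3 : ∑ v ∈ J, ((-2 : ℚ) - (A v v : ℚ))
      = -2 * (J.card : ℚ) - ∑ v ∈ J, (A v v : ℚ) := by
    rw [Finset.sum_sub_distrib, Finset.sum_const, nsmul_eq_mul]
    ring
  have hS4 : ∑ v ∈ J, (-((A *ᵥ l) v : ℚ) + 1)
      = -(∑ v ∈ J, ((A *ᵥ l) v : ℚ)) + (J.card : ℚ) := by
    rw [Finset.sum_add_distrib, Finset.sum_neg_distrib, Finset.sum_const, nsmul_eq_mul]
    ring
  rw [hphi, hS4, hee, hec, heg, hS3]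
  ring

lemma wcube_eq {A : Matrix V V ℤ} (hA : NegDef A) (hAsymm : A.IsSymm)
    (G : SimpleGraph V) (hAadj : ∀ v w : V, v ≠ w → A v w = if G.Adj v w then 1 else 0)
    (l : V → ℤ) (J : Finset V) :
    wcube A l J = chi A (fun v => (l v : ℚ)) + FD G (fun v => -(A *ᵥ l) v) J := by
  unfold wcube FD
  refine Eq.trans ?_ (sup'_const_add _ _ _)
  exact Finset.sup'_congr _ rfl (fun J' _ => chi_diff hA hAsymm G hAadj l J')

end Stmt15

open Stmt15

/-- the coefficient `z(l)` equals the alternating sum of the weights of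
all cubes based at `l`: `z(l) = Σ_{J ⊆ V} (−1)^{|J|+1} w(l, J)`. -/
theorem statement15 (V : Type) [Fintype V] [DecidableEq V]
    (G : SimpleGraph V) (hG : G.IsTree)
    (A : Matrix V V ℤ) (hAsymm : A.IsSymm)
    (hAadj : ∀ v w : V, v ≠ w → A v w = if G.Adj v w then 1 else 0)
    (hAneg : NegDef A)
    (l : V → ℤ) :
    (zcoef A (deg G) (fun v => (l v : ℚ)) : ℚ)
      = ∑ J : Finset V, (-1 : ℚ) ^ (J.card + 1) * wcube A l J := by
  haveI hne : Nonempty V := hG.isConnected.nonempty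
  have hdeg : ∀ v : V, deg G v = (Finset.univ.filter (G.Adj v)).card := by
    intro v
    have h1 : G.neighborSet v = ↑(Finset.univ.filter (G.Adj v)) := by
      ext w; simp [SimpleGraph.mem_neighborSet]
    rw [deg, h1, Set.ncard_coe_finset]
  have hedge : DDq G (Finset.univ : Finset V) + 2 = 2 * ((Finset.univ : Finset V).card : ℚ) := by
    rw [DDq_eq_sum_card]
    have h2 : ∀ v ∈ (Finset.univ : Finset V),
        ((Finset.univ.filter (G.Adj v)).card : ℚ) = (G.degree v : ℚ) := by
      intro v _
      rw [← SimpleGraph.neighborFinset_eq_filter]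
      rfl
    rw [Finset.sum_congr rfl h2]
    have h3 : ∑ v : V, (G.degree v : ℚ) = ((∑ v : V, G.degree v : ℕ) : ℚ) := by
      push_cast; rfl
    rw [h3, SimpleGraph.sum_degrees_eq_twice_card_edges]
    have h4 := hG.card_edgeFinset
    have h5 : (G.edgeFinset.card : ℚ) + 1 = (Fintype.card V : ℚ) := by exact_mod_cast h4
    rw [Finset.card_univ]
    push_cast
    linarith
  have hconn : ∀ v ∈ (Finset.univ : Finset V), ∀ w ∈ (Finset.univ : Finset V),
      ∃ p : G.Walk v w, ∀ x ∈ p.support, x ∈ (Finset.univ : Finset V) := by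
    intro v _ w _
    obtain ⟨p⟩ := hG.isConnected.preconnected v w
    exact ⟨p, fun x _ => Finset.mem_univ x⟩
  have hstep := stepD G Finset.univ Finset.univ_nonempty hconn hedge (fun v => -(A *ᵥ l) v)
  have hsum : ∑ J : Finset V, (-1:ℚ)^(J.card+1) * wcube A l J
      = ∑ J ∈ (Finset.univ : Finset V).powerset,
          (-1:ℚ)^(J.card+1) * FD G (fun v => -(A *ᵥ l) v) J := by
    rw [Finset.powerset_univ]
    have hz : ∑ J : Finset V, (-1:ℚ)^(J.card+1) = 0 := by
      have h0 := powerset_sign_sum (Finset.univ_nonempty (α := V))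
      rw [Finset.powerset_univ] at h0
      calc ∑ J : Finset V, (-1:ℚ)^(J.card+1)
          = ∑ J : Finset V, (-1:ℚ)^(J.card) * (-1) :=
            Finset.sum_congr rfl (fun J _ => by rw [pow_succ])
        _ = 0 := by rw [← Finset.sum_mul, h0, zero_mul]
    calc ∑ J : Finset V, (-1:ℚ)^(J.card+1) * wcube A l J
        = ∑ J : Finset V, ((-1:ℚ)^(J.card+1) * chi A (fun v => (l v:ℚ))
            + (-1:ℚ)^(J.card+1) * FD G (fun v => -(A *ᵥ l) v) J) := by
          refine Finset.sum_congr rfl (fun J _ => ?_)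
          rw [wcube_eq hAneg hAsymm G hAadj l J]; ring
      _ = (∑ J : Finset V, (-1:ℚ)^(J.card+1)) * chi A (fun v => (l v:ℚ))
            + ∑ J : Finset V, (-1:ℚ)^(J.card+1) * FD G (fun v => -(A *ᵥ l) v) J := by
          rw [Finset.sum_add_distrib, Finset.sum_mul]
      _ = ∑ J : Finset V, (-1:ℚ)^(J.card+1) * FD G (fun v => -(A *ᵥ l) v) J := by
          rw [hz, zero_mul, zero_add]
  rw [hsum, hstep, zcoef_eq hAneg (deg G) l]
  by_cases hpos : ∀ v : V, 0 ≤ -(A *ᵥ l) v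
  · rw [if_pos hpos, if_pos (fun v _ => hpos v)]
    push_cast
    refine Finset.prod_congr rfl (fun v _ => ?_)
    rw [hdeg v]
  · rw [if_neg hpos, if_neg (fun h => hpos (fun v => h v (Finset.mem_univ v)))]
    exact Int.cast_zero
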